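/- RDP-to-DP conversion: if a mechanism M is (α, ε(α))-Rényi differentially private for some α > 1, then for any δ ∈ (0,1), M is (ε(α) + log(1/δ)/(α−1), δ)-differentially private. -/

import Mathlib

/-- Rényi divergence of order `α` between discrete distributions `P` and `Q`. -/
noncomputable def renyiDiv {Y : Type*} [Fintype Y] (α : ℝ) (P Q : Y → ℝ) : ℝ :=
  (α - 1)⁻¹ * Real.log (∑ y, Q y * (P y / Q y) ^ α)

/-- RDP-to-DP conversion: if `M` is `(α, ε)`-RDP for some `α > 1`, then for any
`δ ∈ (0,1)`, `M` is `(ε + log(1/δ)/(α-1), δ)`-DP. -/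
theorem stmt_6 {T Y : Type*} [Fintype Y]
    (Adj : T → T → Prop)
    (M : T → Y → ℝ) (α ε : ℝ) (hα : 1 < α)
    (hpos : ∀ D y, 0 < M D y)
    (hpmf : ∀ D, ∑ y, M D y = 1)
    (hRDP : ∀ D D', Adj D D' → renyiDiv α (M D) (M D') ≤ ε) :
    ∀ δ : ℝ, 0 < δ → δ < 1 → ∀ D D', Adj D D' → ∀ E : Finset Y,
      ∑ y ∈ E, M D y ≤
        Real.exp (ε + Real.log (1 / δ) / (α - 1)) * ∑ y ∈ E, M D' y + δ := by
  intro δ hδ0 hδ1 D D' hAdj E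
  classical
  have hα1 : (0:ℝ) < α - 1 := by linarith
  set ε' : ℝ := ε + Real.log (1 / δ) / (α - 1) with hε'
  set P := M D
  set Q := M D'
  have hPpos : ∀ y, 0 < P y := hpos D
  have hQpos : ∀ y, 0 < Q y := hpos D'
  -- the full Rényi sum
  set Sig : ℝ := ∑ y, Q y * (P y / Q y) ^ α with hSig
  have htermpos : ∀ y : Y, 0 < Q y * (P y / Q y) ^ α := by
    intro y
    exact mul_pos (hQpos y) (Real.rpow_pos_of_pos (div_pos (hPpos y) (hQpos y)) α)
  have hNe : Nonempty Y := by
    by_contra h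
    have : (∑ y, M D y) = 0 := by
      rw [Finset.sum_eq_zero]
      intro y _
      exact absurd ⟨y⟩ h
    rw [hpmf D] at this; norm_num at this
  have hSigpos : 0 < Sig := Finset.sum_pos (fun y _ => htermpos y) Finset.univ_nonempty
  have hSigle : Sig ≤ Real.exp (ε * (α - 1)) := by
    have h := hRDP D D' hAdj
    unfold renyiDiv at h
    have hlog : Real.log Sig ≤ ε * (α - 1) := by
      have := (inv_mul_le_iff₀ hα1).mp h
      linarith [this]
    calc Sig = Real.exp (Real.log Sig) := (Real.exp_log hSigpos).symm
      _ ≤ Real.exp (ε * (α - 1)) := Real.exp_le_exp.mpr hlog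
  -- bad set
  set S : Finset Y := E.filter (fun y => Real.exp ε' * Q y < P y) with hS
  -- mass of bad set bounded by δ
  have hSbound : ∑ y ∈ S, P y ≤ δ := by
    have key : ∀ y ∈ S, P y * Real.exp (ε' * (α - 1)) ≤ Q y * (P y / Q y) ^ α := by
      intro y hy
      have hyS : Real.exp ε' * Q y < P y := (Finset.mem_filter.mp hy).2
      have hratio : Real.exp ε' < P y / Q y := (lt_div_iff₀ (hQpos y)).mpr (by linarith [hyS])
      have hrw : Q y * (P y / Q y) ^ α = P y * (P y / Q y) ^ (α - 1) := by
        have hb : (0:ℝ) < P y / Q y := div_pos (hPpos y) (hQpos y)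
        have h2 : (P y / Q y) ^ α = (P y / Q y) ^ (α - 1) * (P y / Q y) := by
          rw [← Real.rpow_add_one (ne_of_gt hb)]
          ring_nf
        have hQP : Q y * (P y / Q y) = P y :=
          mul_div_cancel₀ (P y) (ne_of_gt (hQpos y))
        calc Q y * (P y / Q y) ^ α
            = Q y * (P y / Q y) * (P y / Q y) ^ (α - 1) := by rw [h2]; ring
          _ = P y * (P y / Q y) ^ (α - 1) := by rw [hQP]
      rw [hrw]
      have hmono : Real.exp ε' ^ (α - 1) ≤ (P y / Q y) ^ (α - 1) :=
        Real.rpow_le_rpow (Real.exp_pos _).le hratio.le hα1.le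
      have hexp : Real.exp (ε' * (α - 1)) = Real.exp ε' ^ (α - 1) := Real.exp_mul _ _
      rw [hexp]
      exact mul_le_mul_of_nonneg_left hmono (hPpos y).le
    have hsum : (∑ y ∈ S, P y) * Real.exp (ε' * (α - 1)) ≤ Sig := by
      rw [Finset.sum_mul]
      calc ∑ y ∈ S, P y * Real.exp (ε' * (α - 1))
          ≤ ∑ y ∈ S, Q y * (P y / Q y) ^ α := Finset.sum_le_sum key
        _ ≤ Sig := Finset.sum_le_sum_of_subset_of_nonneg (Finset.subset_univ S)
              (fun y _ _ => (htermpos y).le)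
    have : (∑ y ∈ S, P y) * Real.exp (ε' * (α - 1)) ≤ Real.exp (ε * (α - 1)) :=
      hsum.trans hSigle
    have hdiv : (∑ y ∈ S, P y) ≤ Real.exp (ε * (α - 1)) / Real.exp (ε' * (α - 1)) :=
      (le_div_iff₀ (Real.exp_pos _)).mpr this
    have hcalc : Real.exp (ε * (α - 1)) / Real.exp (ε' * (α - 1)) = δ := by
      rw [← Real.exp_sub]
      have h1 : ε * (α - 1) - ε' * (α - 1) = Real.log δ := by
        rw [hε', one_div, Real.log_inv]
        field_simp
        ring
      rw [h1, Real.exp_log hδ0]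
    rwa [hcalc] at hdiv
  -- good part bounded
  have hgood : ∑ y ∈ E \ S, P y ≤ Real.exp ε' * ∑ y ∈ E, Q y := by
    have h1 : ∑ y ∈ E \ S, P y ≤ ∑ y ∈ E \ S, Real.exp ε' * Q y := by
      apply Finset.sum_le_sum
      intro y hy
      have hyE := (Finset.mem_sdiff.mp hy).1
      have hyNS := (Finset.mem_sdiff.mp hy).2
      have : ¬ (Real.exp ε' * Q y < P y) := by
        intro h; exact hyNS (Finset.mem_filter.mpr ⟨hyE, h⟩)
      linarith [not_lt.mp this]
    calc ∑ y ∈ E \ S, P y ≤ ∑ y ∈ E \ S, Real.exp ε' * Q y := h1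
      _ = Real.exp ε' * ∑ y ∈ E \ S, Q y := by rw [Finset.mul_sum]
      _ ≤ Real.exp ε' * ∑ y ∈ E, Q y := by
          apply mul_le_mul_of_nonneg_left _ (Real.exp_pos _).le
          exact Finset.sum_le_sum_of_subset_of_nonneg (Finset.sdiff_subset)
            (fun y _ _ => (hQpos y).le)
  have hsplit : ∑ y ∈ E, P y = ∑ y ∈ E \ S, P y + ∑ y ∈ S, P y :=
    (Finset.sum_sdiff (Finset.filter_subset _ _)).symm
  rw [hsplit]
  linarith
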